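/- arXiv:2102.04239 — 3 statements merged into one kernel-verified Lean document; each statement's English description precedes it below -/
import Mathlib

section
/- Let X be a finite simple connected graph with spanning tree T, and let f be an automorphism of X with M_T(f) = id. If two distinct fundamental oriented cycles C_i and C_j of T intersect nontrivially, then f fixes C_i ∪ C_j pointwise (on vertices and darts). -/
open SimpleGraph
variable {V : Type*}

variable {V : Type*}

/-- The cycle space (= first homology with coefficients in `R`) of a graph,
realized as antisymmetric flows supported on edges with zero divergence. -/
def cycleSpace (R : Type*) [CommRing R] [Fintype V] (G : SimpleGraph V) :
    Submodule R (V → V → R) where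
  carrier := {f | (∀ u v, ¬ G.Adj u v → f u v = 0) ∧ (∀ u v, f u v = - f v u) ∧
    (∀ u, ∑ v, f u v = 0)}
  add_mem' := by
    rintro f g ⟨hf1, hf2, hf3⟩ ⟨hg1, hg2, hg3⟩
    refine ⟨fun u v h => by simp [hf1 u v h, hg1 u v h], fun u v => ?_, fun u => ?_⟩
    · simp only [Pi.add_apply]; rw [hf2 u v, hg2 u v]; ring
    · simp [Finset.sum_add_distrib, hf3 u, hg3 u]
  zero_mem' := ⟨fun _ _ _ => rfl, fun _ _ => by simp, fun _ => by simp⟩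
  smul_mem' := by
    rintro c f ⟨h1, h2, h3⟩
    refine ⟨fun u v h => by simp [h1 u v h], fun u v => by simp [h2 u v], fun u => ?_⟩
    simp only [Pi.smul_apply, smul_eq_mul]
    rw [← Finset.mul_sum, h3 u, mul_zero]

/-- An automorphism acts trivially (as the identity) on `H_1(X,R)`. -/
def FixesH1 (R : Type*) [CommRing R] [Fintype V] (G : SimpleGraph V) (f : G ≃g G) : Prop :=
  ∀ c ∈ cycleSpace R G, ∀ u v : V, c (f u) (f v) = c u v

namespace KFAux

open SimpleGraph

open scoped Classical

noncomputable section

variable {V : Type*}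

/-- The integer flow associated to a walk. -/
def wflow {G : SimpleGraph V} {x y : V} (W : G.Walk x y) : V → V → ℤ :=
  fun u v =>
    (W.darts.map (fun d => if d.toProd = (u, v) then (1 : ℤ)
      else if d.toProd = (v, u) then -1 else 0)).sum

variable {G : SimpleGraph V} {x y w a : V}

lemma wflow_cons (h : G.Adj x w) (q : G.Walk w y) (u v : V) :
    wflow (Walk.cons h q) u v =
      (if (x, w) = (u, v) then (1 : ℤ) else if (x, w) = (v, u) then -1 else 0)
        + wflow q u v := by
  simp [wflow]

lemma wflow_antisymm (W : G.Walk x y) (u v : V) : wflow W u v = - wflow W v u := by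
  induction W with
  | nil => simp [wflow]
  | cons h q ih =>
    rename_i a b c
    rw [wflow_cons, wflow_cons, ih]
    split_ifs with A B B
    · exact absurd ((congrArg Prod.fst B).trans (congrArg Prod.snd A).symm) h.ne
    · ring
    · ring
    · ring

lemma wflow_support (W : G.Walk x y) (u v : V) (h : ¬ G.Adj u v) : wflow W u v = 0 := by
  induction W with
  | nil => simp [wflow]
  | cons hadj q ih =>
    rw [wflow_cons, ih]
    rename_i a b _
    have h1 : (a, b) ≠ (u, v) := by
      rintro ⟨⟩
      exact h hadj
    have h2 : (a, b) ≠ (v, u) := by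
      rintro ⟨⟩
      exact h hadj.symm
    rw [if_neg h1, if_neg h2]
    ring

lemma wflow_div [Fintype V] (W : G.Walk x y) (u : V) :
    ∑ v, wflow W u v = (if u = x then 1 else 0) - (if u = y then (1 : ℤ) else 0) := by
  induction W with
  | nil => simp [wflow]
  | cons hadj q ih =>
    rename_i a b c
    simp only [wflow_cons, Finset.sum_add_distrib, ih]
    have key : ∑ v, (if (a, b) = (u, v) then (1 : ℤ) else if (a, b) = (v, u) then -1 else 0)
        = (if u = a then 1 else 0) - (if u = b then 1 else 0) := by
      by_cases hua : u = a <;> by_cases hub : u = b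
      · exact absurd (hua.symm.trans hub) hadj.ne
      · subst hua
        rw [Finset.sum_eq_single b]
        · rw [if_pos rfl]
          simp [hub]
        · intro c _ hc
          rw [if_neg (fun h => hc (congrArg Prod.snd h).symm),
            if_neg (fun h => hub ((congrArg Prod.snd h).symm : u = b))]
        · simp
      · subst hub
        rw [Finset.sum_eq_single a]
        · rw [if_neg (fun h => hua ((congrArg Prod.fst h).symm : u = a)), if_pos rfl]
          simp [hua]
        · intro c _ hc
          rw [if_neg (fun h => hua ((congrArg Prod.fst h).symm : u = a)),
            if_neg (fun h => hc ((congrArg Prod.fst h).symm : c = a))]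
        · simp
      · rw [Finset.sum_eq_zero]
        · simp [hua, hub]
        · intro c _
          rw [if_neg (fun h => hua ((congrArg Prod.fst h).symm : u = a)),
            if_neg (fun h => hub ((congrArg Prod.snd h).symm : u = b))]
    rw [key]
    ring

/-- The list of darts of a walk, as ordered pairs. -/
def dl {G : SimpleGraph V} {x y : V} (W : G.Walk x y) : List (V × V) :=
  W.darts.map Dart.toProd

lemma dl_cons (h : G.Adj x w) (q : G.Walk w y) :
    dl (Walk.cons h q) = (x, w) :: dl q := by
  simp [dl]

lemma edge_of_mem_dl {u v : V} {W : G.Walk x y} (h : (u, v) ∈ dl W) :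
    s(u, v) ∈ W.edges := by
  obtain ⟨d, hd, hd2⟩ := List.mem_map.mp h
  have : d.edge = s(u, v) := by rw [Dart.edge, hd2]
  rw [← this]
  exact List.mem_map_of_mem (f := Dart.edge) hd

lemma mem_dl_or_of_edge {u v : V} {W : G.Walk x y} (h : s(u, v) ∈ W.edges) :
    (u, v) ∈ dl W ∨ (v, u) ∈ dl W := by
  obtain ⟨d, hd, hd2⟩ := List.mem_map.mp h
  rw [Dart.edge, Sym2.eq_iff] at hd2
  rcases hd2 with ⟨h1, h2⟩ | ⟨h1, h2⟩
  · left
    have : d.toProd = (u, v) := Prod.ext h1 h2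
    exact this ▸ List.mem_map_of_mem (f := Dart.toProd) hd
  · right
    have : d.toProd = (v, u) := Prod.ext h1 h2
    exact this ▸ List.mem_map_of_mem (f := Dart.toProd) hd

lemma wflow_eq_zero_of_not_mem {u v : V} {W : G.Walk x y}
    (h1 : (u, v) ∉ dl W) (h2 : (v, u) ∉ dl W) : wflow W u v = 0 := by
  induction W with
  | nil => simp [wflow]
  | cons hadj q ih =>
    rw [dl_cons, List.mem_cons, not_or] at h1 h2
    rw [wflow_cons, if_neg (Ne.symm h1.1), if_neg (Ne.symm h2.1), ih h1.2 h2.2]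
    ring

lemma wflow_eq_one {u v : V} {W : G.Walk x y} (hW : W.IsTrail)
    (h : (u, v) ∈ dl W) : wflow W u v = 1 := by
  induction W with
  | nil => simp [dl] at h
  | cons hadj q ih =>
    rename_i a b c
    rw [Walk.isTrail_cons] at hW
    rw [dl_cons, List.mem_cons] at h
    rw [wflow_cons]
    rcases h with h | h
    · rw [if_pos h.symm]
      have hu : u = a := congrArg Prod.fst h
      have hv : v = b := congrArg Prod.snd h
      have hq1 : (u, v) ∉ dl q := fun hm => by
        have he := edge_of_mem_dl hm
        rw [hu, hv] at he
        exact hW.2 he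
      have hq2 : (v, u) ∉ dl q := fun hm => by
        have he := edge_of_mem_dl hm
        rw [Sym2.eq_swap] at he
        rw [hu, hv] at he
        exact hW.2 he
      rw [wflow_eq_zero_of_not_mem hq1 hq2]
      ring
    · have hne1 : (a, b) ≠ (u, v) := by
        intro hEq
        injection hEq with h1 h2
        subst h1; subst h2
        exact hW.2 (edge_of_mem_dl h)
      have hne2 : (a, b) ≠ (v, u) := by
        intro hEq
        injection hEq with h1 h2
        subst h1; subst h2
        have he := edge_of_mem_dl h
        rw [Sym2.eq_swap] at he
        exact hW.2 he
      rw [if_neg hne1, if_neg hne2, ih hW.1 h]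
      ring

lemma mem_dl_of_wflow {u v : V} {W : G.Walk x y} (hW : W.IsTrail)
    (h : wflow W u v = 1) : (u, v) ∈ dl W := by
  by_cases h1 : (u, v) ∈ dl W
  · exact h1
  by_cases h2 : (v, u) ∈ dl W
  · have := wflow_eq_one hW h2
    rw [wflow_antisymm] at this
    omega
  · rw [wflow_eq_zero_of_not_mem h1 h2] at h
    omega

lemma list_aux {α : Type*} {l : List α} {a : α} (h : l ≠ []) (hn : l.Nodup)
    (hl : l.getLast h = a) : (a :: l).dropLast.Nodup := by
  have h2 := hn
  rw [← List.dropLast_append_getLast h, hl] at h2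
  have hdisj := List.disjoint_of_nodup_append h2
  cases l with
  | nil => exact absurd rfl h
  | cons b tl =>
    rw [List.dropLast_cons₂]
    refine List.nodup_cons.mpr ⟨fun hmem => hdisj hmem (List.mem_singleton_self a), ?_⟩
    exact hn.sublist (List.dropLast_sublist _)

lemma cycle_tail_ne_nil {W : G.Walk a a} (hW : W.IsCycle) : W.support.tail ≠ [] := by
  have h3 := hW.three_le_length
  have h4 := W.length_support
  intro hnil
  have h5 : W.support.length = 1 := by
    rw [W.support_eq_cons, hnil]
    rfl
  omega

lemma cycle_dropLast_nodup {W : G.Walk a a} (hW : W.IsCycle) :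
    W.support.dropLast.Nodup := by
  have htn := cycle_tail_ne_nil hW
  have hlast : W.support.tail.getLast htn = a := by
    rw [List.getLast_tail]
    exact W.getLast_support
  have := list_aux htn hW.support_nodup hlast
  rwa [← W.support_eq_cons] at this

lemma dl_fst_unique {W : G.Walk a a} (hW : W.IsCycle) ⦃u v v' : V⦄
    (h : (u, v) ∈ dl W) (h' : (u, v') ∈ dl W) : v = v' := by
  obtain ⟨d, hd, hd2⟩ := List.mem_map.mp h
  obtain ⟨d', hd', hd2'⟩ := List.mem_map.mp h'
  have hnd : (W.darts.map (·.fst)).Nodup := by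
    rw [Walk.map_fst_darts]
    exact cycle_dropLast_nodup hW
  have : d = d' := List.inj_on_of_nodup_map hnd hd hd'
    (by rw [show d.fst = u from congrArg Prod.fst hd2,
      show d'.fst = u from congrArg Prod.fst hd2'])
  rw [← show d.snd = v from congrArg Prod.snd hd2,
    ← show d'.snd = v' from congrArg Prod.snd hd2', this]

lemma dl_snd_unique {W : G.Walk a a} (hW : W.IsCycle) ⦃u u' v : V⦄
    (h : (u, v) ∈ dl W) (h' : (u', v) ∈ dl W) : u = u' := by
  obtain ⟨d, hd, hd2⟩ := List.mem_map.mp h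
  obtain ⟨d', hd', hd2'⟩ := List.mem_map.mp h'
  have hnd : (W.darts.map (·.snd)).Nodup := by
    rw [Walk.map_snd_darts]
    exact hW.support_nodup
  have : d = d' := List.inj_on_of_nodup_map hnd hd hd'
    (by rw [show d.snd = v from congrArg Prod.snd hd2,
      show d'.snd = v from congrArg Prod.snd hd2'])
  rw [← show d.fst = u from congrArg Prod.fst hd2,
    ← show d'.fst = u' from congrArg Prod.fst hd2', this]

lemma exists_dl_of_mem_support {W : G.Walk a a} (hW : W.IsCycle) {u : V}
    (h : u ∈ W.support) : ∃ v, (u, v) ∈ dl W := by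
  have hdl : u ∈ W.support.dropLast := by
    have htn := cycle_tail_ne_nil hW
    have hsplit : W.support.dropLast ++ [a] = W.support := by
      conv_rhs => rw [← List.dropLast_append_getLast W.support_ne_nil]
      rw [W.getLast_support]
    rcases List.mem_append.mp (show u ∈ W.support.dropLast ++ [a] by rw [hsplit]; exact h)
      with h1 | h1
    · exact h1
    · rw [List.mem_singleton] at h1
      subst h1
      rw [W.support_eq_cons]
      cases htail : W.support.tail with
      | nil => exact absurd htail htn
      | cons b tl =>
        rw [List.dropLast_cons₂]
        exact List.mem_cons_self
  rw [← Walk.map_fst_darts] at hdl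
  obtain ⟨d, hd, hd2⟩ := List.mem_map.mp hdl
  exact ⟨d.snd, List.mem_map.mpr ⟨d, hd, Prod.ext hd2 rfl⟩⟩

lemma exists_dl_snd_of_mem_support {W : G.Walk a a} (hW : W.IsCycle) {u : V}
    (h : u ∈ W.support) : ∃ z, (z, u) ∈ dl W := by
  have htn := cycle_tail_ne_nil hW
  have hdl : u ∈ W.support.tail := by
    rcases List.mem_cons.mp (show u ∈ a :: W.support.tail by
        rw [← W.support_eq_cons]; exact h) with h1 | h1
    · rw [h1]
      have hgl : W.support.tail.getLast htn = a := by
        rw [List.getLast_tail]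
        exact W.getLast_support
      have hmem := List.getLast_mem htn
      rw [hgl] at hmem
      exact hmem
    · exact h1
  rw [← Walk.map_snd_darts] at hdl
  obtain ⟨d, hd, hd2⟩ := List.mem_map.mp hdl
  exact ⟨d.fst, List.mem_map.mpr ⟨d, hd, Prod.ext rfl hd2⟩⟩

lemma mem_support_of_dl {W : G.Walk x y} {u v : V} (h : (u, v) ∈ dl W) :
    u ∈ W.support := by
  obtain ⟨d, hd, hd2⟩ := List.mem_map.mp h
  have := Walk.dart_fst_mem_support_of_mem_darts _ hd
  rwa [show d.fst = u from congrArg Prod.fst hd2] at this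

section Abstract
variable {T : SimpleGraph V} {D : V → V → Prop} {g : V → V}

lemma step_fix (d1 : ∀ ⦃u v v'⦄, D u v → D u v' → v = v')
    (d2 : ∀ ⦃u u' v⦄, D u v → D u' v → u = u')
    (K : ∀ ⦃u v⦄, D u v → D (g u) (g v))
    {x w : V} (hx : g x = x) (h : D x w ∨ D w x) : g w = w := by
  rcases h with h | h
  · have := K h
    rw [hx] at this
    exact (d1 h this).symm
  · have := K h
    rw [hx] at this
    exact d2 this h

lemma walk_fix (d1 : ∀ ⦃u v v'⦄, D u v → D u v' → v = v')
    (d2 : ∀ ⦃u u' v⦄, D u v → D u' v → u = u')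
    (K : ∀ ⦃u v⦄, D u v → D (g u) (g v))
    {x t : V} (q : T.Walk x t)
    (hE : ∀ a b, s(a, b) ∈ q.edges → D a b ∨ D b a)
    (hx : g x = x) : g t = t := by
  induction q with
  | nil => exact hx
  | cons h q ih =>
    rename_i a b c
    exact ih (fun a' b' hm => hE a' b' (List.mem_cons_of_mem _ hm))
      (step_fix d1 d2 K hx (hE a b (by rw [Walk.edges_cons]; exact List.mem_cons_self)))

/-- Walking inside the "interval", the walk is forced forward. -/
lemma walk_forced (d2 : ∀ ⦃u u' v⦄, D u v → D u' v → u = u')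
    {x t : V} (q : T.Walk x t) (hq : q.IsPath)
    (hE : ∀ a b, s(a, b) ∈ q.edges → D a b ∨ D b a)
    (hpred : ∀ z, D z x → z ∉ q.support.tail) :
    t = x ∨ ∃ z ∈ q.support, D z t := by
  induction q with
  | nil => exact Or.inl rfl
  | cons h q ih =>
    rename_i a b c
    rw [Walk.cons_isPath_iff] at hq
    have hab : D a b ∨ D b a := hE a b (by rw [Walk.edges_cons]; exact List.mem_cons_self)
    have hDab : D a b := by
      rcases hab with h1 | h1
      · exact h1
      · exfalso
        apply hpred b h1
        rw [Walk.support_cons, List.tail_cons]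
        exact q.start_mem_support
    have hpred' : ∀ z, D z b → z ∉ q.support.tail := by
      intro z hz
      rw [d2 hz hDab]
      intro hmem
      exact hq.2 (List.tail_subset _ hmem)
    rcases ih hq.1 (fun a' b' hm => hE a' b' (List.mem_cons_of_mem _ hm)) hpred' with h1 | h1
    · subst h1
      exact Or.inr ⟨a, Walk.start_mem_support _, hDab⟩
    · obtain ⟨z, hz1, hz2⟩ := h1
      exact Or.inr ⟨z, by simp [hz1], hz2⟩

lemma walk_reach (d1 : ∀ ⦃u v v'⦄, D u v → D u v' → v = v')
    (d2 : ∀ ⦃u u' v⦄, D u v → D u' v → u = u')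
    {S : Set V}
    (hsuccC : ∀ u ∈ S, ∃ z ∈ S, D u z) (hpredC : ∀ u ∈ S, ∃ z ∈ S, D z u)
    {x t : V} (q : T.Walk x t)
    (hE : ∀ a b, s(a, b) ∈ q.edges → D a b ∨ D b a)
    (hx : x ∈ S) : t ∈ S := by
  induction q with
  | nil => exact hx
  | cons h q ih =>
    rename_i a b c
    have hab : D a b ∨ D b a := hE a b (by rw [Walk.edges_cons]; exact List.mem_cons_self)
    have hb : b ∈ S := by
      rcases hab with h1 | h1
      · obtain ⟨z, hz1, hz2⟩ := hsuccC a hx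
        rwa [← d1 hz2 h1]
      · obtain ⟨z, hz1, hz2⟩ := hpredC a hx
        rwa [← d2 hz2 h1]
    exact ih (fun a' b' hm => hE a' b' (List.mem_cons_of_mem _ hm)) hb

end Abstract

/-- Extract a path between two support points of a path, staying inside it. -/
lemma exists_segment {T : SimpleGraph V} {s t x y : V} (p : T.Walk s t) (hp : p.IsPath)
    (hx : x ∈ p.support) (hy : y ∈ p.support) :
    ∃ q : T.Walk x y, q.IsPath ∧ (∀ e ∈ q.edges, e ∈ p.edges) ∧
      (∀ v ∈ q.support, v ∈ p.support) := by
  by_cases hy2 : y ∈ (p.dropUntil x hx).support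
  · refine ⟨(p.dropUntil x hx).takeUntil y hy2, (hp.dropUntil hx).takeUntil hy2,
      fun e he => p.edges_dropUntil_subset hx ((p.dropUntil x hx).edges_takeUntil_subset hy2 he),
      fun v hv => p.support_dropUntil_subset hx
        ((p.dropUntil x hx).support_takeUntil_subset hy2 hv)⟩
  · have hy3 : y ∈ (p.takeUntil x hx).support := by
      have := Walk.mem_support_append_iff (t := y) (p.takeUntil x hx) (p.dropUntil x hx)
      rw [Walk.take_spec p hx] at this
      rcases this.mp hy with h1 | h1
      · exact h1
      · exact absurd h1 hy2
    have hy4 : y ∈ (p.takeUntil x hx).reverse.support := by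
      rwa [Walk.support_reverse, List.mem_reverse]
    refine ⟨(p.takeUntil x hx).reverse.takeUntil y hy4,
      ((hp.takeUntil hx).reverse).takeUntil hy4,
      fun e he => ?_, fun v hv => ?_⟩
    · have h1 := (p.takeUntil x hx).reverse.edges_takeUntil_subset hy4 he
      rw [Walk.edges_reverse, List.mem_reverse] at h1
      exact p.edges_takeUntil_subset hx h1
    · have h1 := (p.takeUntil x hx).reverse.support_takeUntil_subset hy4 hv
      rw [Walk.support_reverse, List.mem_reverse] at h1
      exact p.support_takeUntil_subset hx h1

end

end KFAux

open KFAux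

theorem kernel_fixes_intersecting_fundamental_cycles_pointwise [Fintype V]
    (G : SimpleGraph V) (hG : G.Connected)
    (T : SimpleGraph V) (hTG : T ≤ G) (hT : T.IsTree)
    (f : G ≃g G) (hf : FixesH1 ℤ G f)
    -- two cotree darts and the corresponding unique paths in `T`
    {a₁ b₁ a₂ b₂ : V} (h₁ : G.Adj a₁ b₁) (hn₁ : ¬ T.Adj a₁ b₁)
    (h₂ : G.Adj a₂ b₂) (hn₂ : ¬ T.Adj a₂ b₂)
    (p₁ : T.Walk b₁ a₁) (hp₁ : p₁.IsPath) (p₂ : T.Walk b₂ a₂) (hp₂ : p₂.IsPath)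
    -- the two fundamental cycles are distinct but intersect nontrivially
    (hne : (Walk.cons h₁ (p₁.mapLe hTG)).toSubgraph ≠ (Walk.cons h₂ (p₂.mapLe hTG)).toSubgraph)
    (hmeet : ((Walk.cons h₁ (p₁.mapLe hTG)).toSubgraph ⊓
        (Walk.cons h₂ (p₂.mapLe hTG)).toSubgraph).verts.Nonempty) :
    -- `f` fixes the union of the two cycles pointwise
    ∀ v ∈ ((Walk.cons h₁ (p₁.mapLe hTG)).toSubgraph ⊔
        (Walk.cons h₂ (p₂.mapLe hTG)).toSubgraph).verts, f v = v := by
  classical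
  have hcoe : ⇑(Hom.ofLE hTG) = id := rfl
  have hsup1 : (p₁.mapLe hTG).support = p₁.support := by
    rw [Walk.mapLe, Walk.support_map, hcoe, List.map_id]
  have hsup2 : (p₂.mapLe hTG).support = p₂.support := by
    rw [Walk.mapLe, Walk.support_map, hcoe, List.map_id]
  have hedg1 : (p₁.mapLe hTG).edges = p₁.edges := by
    rw [Walk.mapLe, Walk.edges_map, hcoe, Sym2.map_id, List.map_id]
  have hedg2 : (p₂.mapLe hTG).edges = p₂.edges := by
    rw [Walk.mapLe, Walk.edges_map, hcoe, Sym2.map_id, List.map_id]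
  set W₁ : G.Walk a₁ a₁ := Walk.cons h₁ (p₁.mapLe hTG) with hW₁def
  set W₂ : G.Walk a₂ a₂ := Walk.cons h₂ (p₂.mapLe hTG) with hW₂def
  have hc₁ : W₁.IsCycle := by
    rw [hW₁def, Walk.cons_isCycle_iff]
    refine ⟨(Walk.mapLe_isPath hTG).mpr hp₁, ?_⟩
    rw [hedg1]
    exact fun hmem => hn₁ (p₁.adj_of_mem_edges hmem)
  have hc₂ : W₂.IsCycle := by
    rw [hW₂def, Walk.cons_isCycle_iff]
    refine ⟨(Walk.mapLe_isPath hTG).mpr hp₂, ?_⟩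
    rw [hedg2]
    exact fun hmem => hn₂ (p₂.adj_of_mem_edges hmem)
  have hmem₁ : wflow W₁ ∈ cycleSpace ℤ G := by
    refine ⟨fun u v h => wflow_support _ u v h, fun u v => by rw [wflow_antisymm],
      fun u => by rw [wflow_div]; ring⟩
  have hmem₂ : wflow W₂ ∈ cycleSpace ℤ G := by
    refine ⟨fun u v h => wflow_support _ u v h, fun u v => by rw [wflow_antisymm],
      fun u => by rw [wflow_div]; ring⟩
  have hK₁ : ∀ ⦃u v : V⦄, (u, v) ∈ dl W₁ → (f u, f v) ∈ dl W₁ := by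
    intro u v h
    have h1 : wflow W₁ u v = 1 := wflow_eq_one hc₁.isCircuit.isTrail h
    exact mem_dl_of_wflow hc₁.isCircuit.isTrail (by rw [hf _ hmem₁ u v]; exact h1)
  have hK₂ : ∀ ⦃u v : V⦄, (u, v) ∈ dl W₂ → (f u, f v) ∈ dl W₂ := by
    intro u v h
    have h1 : wflow W₂ u v = 1 := wflow_eq_one hc₂.isCircuit.isTrail h
    exact mem_dl_of_wflow hc₂.isCircuit.isTrail (by rw [hf _ hmem₂ u v]; exact h1)
  have hK₁s : ∀ ⦃u v : V⦄, (u, v) ∈ dl W₁ → (f.symm u, f.symm v) ∈ dl W₁ := by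
    intro u v h
    have h1 : wflow W₁ u v = 1 := wflow_eq_one hc₁.isCircuit.isTrail h
    have h2 := hf _ hmem₁ (f.symm u) (f.symm v)
    rw [RelIso.apply_symm_apply, RelIso.apply_symm_apply] at h2
    rw [h2] at h1
    exact mem_dl_of_wflow hc₁.isCircuit.isTrail h1
  have hK₂s : ∀ ⦃u v : V⦄, (u, v) ∈ dl W₂ → (f.symm u, f.symm v) ∈ dl W₂ := by
    intro u v h
    have h1 : wflow W₂ u v = 1 := wflow_eq_one hc₂.isCircuit.isTrail h
    have h2 := hf _ hmem₂ (f.symm u) (f.symm v)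
    rw [RelIso.apply_symm_apply, RelIso.apply_symm_apply] at h2
    rw [h2] at h1
    exact mem_dl_of_wflow hc₂.isCircuit.isTrail h1
  have hWs₁ : ∀ {x : V}, x ∈ W₁.support ↔ x ∈ p₁.support := by
    intro x
    rw [hW₁def, Walk.support_cons, hsup1, List.mem_cons]
    constructor
    · rintro (rfl | h)
      · exact p₁.end_mem_support
      · exact h
    · exact Or.inr
  have hWs₂ : ∀ {x : V}, x ∈ W₂.support ↔ x ∈ p₂.support := by
    intro x
    rw [hW₂def, Walk.support_cons, hsup2, List.mem_cons]
    constructor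
    · rintro (rfl | h)
      · exact p₂.end_mem_support
      · exact h
    · exact Or.inr
  set S : Set V := {v | v ∈ W₁.support ∧ v ∈ W₂.support} with hSdef
  have hSf : ∀ v ∈ S, f v ∈ S := by
    rintro v ⟨hv1, hv2⟩
    obtain ⟨w1, hw1⟩ := exists_dl_of_mem_support hc₁ hv1
    obtain ⟨w2, hw2⟩ := exists_dl_of_mem_support hc₂ hv2
    exact ⟨mem_support_of_dl (hK₁ hw1), mem_support_of_dl (hK₂ hw2)⟩
  have hSfs : ∀ v ∈ S, f.symm v ∈ S := by
    rintro v ⟨hv1, hv2⟩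
    obtain ⟨w1, hw1⟩ := exists_dl_of_mem_support hc₁ hv1
    obtain ⟨w2, hw2⟩ := exists_dl_of_mem_support hc₂ hv2
    exact ⟨mem_support_of_dl (hK₁s hw1), mem_support_of_dl (hK₂s hw2)⟩
  have hSnf : ∀ v, v ∉ S → f v ∉ S := by
    intro v hv hcon
    have := hSfs _ hcon
    rw [RelIso.symm_apply_apply] at this
    exact hv this
  have hE₁ : ∀ e, e ∈ p₁.edges → e ∈ W₁.edges := by
    intro e he
    rw [hW₁def, Walk.edges_cons, hedg1]
    exact List.mem_cons_of_mem _ he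
  have hE₂ : ∀ e, e ∈ p₂.edges → e ∈ W₂.edges := by
    intro e he
    rw [hW₂def, Walk.edges_cons, hedg2]
    exact List.mem_cons_of_mem _ he
  have hseg : ∀ x ∈ S, ∀ y ∈ S, ∃ q : T.Walk x y, q.IsPath ∧
      (∀ e ∈ q.edges, e ∈ p₁.edges ∧ e ∈ p₂.edges) ∧ (∀ v ∈ q.support, v ∈ S) := by
    rintro x ⟨hx1, hx2⟩ y ⟨hy1, hy2⟩
    obtain ⟨q1, hq1p, hq1e, hq1s⟩ := exists_segment p₁ hp₁ (hWs₁.mp hx1) (hWs₁.mp hy1)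
    obtain ⟨q2, hq2p, hq2e, hq2s⟩ := exists_segment p₂ hp₂ (hWs₂.mp hx2) (hWs₂.mp hy2)
    have heq : q1 = q2 := (hT.existsUnique_path x y).unique hq1p hq2p
    subst heq
    exact ⟨q1, hq1p, fun e he => ⟨hq1e e he, hq2e e he⟩,
      fun v hv => ⟨hWs₁.mpr (hq1s v hv), hWs₂.mpr (hq2s v hv)⟩⟩
  have keyfix : ∀ u ∈ S, f u = u →
      ∀ v ∈ (W₁.toSubgraph ⊔ W₂.toSubgraph).verts, f v = v := by
    rintro u ⟨hu1, hu2⟩ hfu v hv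
    rw [Subgraph.verts_sup, Set.mem_union, Walk.mem_verts_toSubgraph,
      Walk.mem_verts_toSubgraph] at hv
    rcases hv with hv | hv
    · obtain ⟨q, hqp, hqe, hqs⟩ := exists_segment p₁ hp₁ (hWs₁.mp hu1) (hWs₁.mp hv)
      exact walk_fix (dl_fst_unique hc₁) (dl_snd_unique hc₁) hK₁ q
        (fun a b hm => mem_dl_or_of_edge (hE₁ _ (hqe _ hm))) hfu
    · obtain ⟨q, hqp, hqe, hqs⟩ := exists_segment p₂ hp₂ (hWs₂.mp hu2) (hWs₂.mp hv)
      exact walk_fix (dl_fst_unique hc₂) (dl_snd_unique hc₂) hK₂ q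
        (fun a b hm => mem_dl_or_of_edge (hE₂ _ (hqe _ hm))) hfu
  have conc : (∃ u ∈ S, f u = u) →
      ∀ v ∈ (W₁.toSubgraph ⊔ W₂.toSubgraph).verts, f v = v := by
    rintro ⟨u, hu, hfix⟩
    exact keyfix u hu hfix
  have bdry : ∀ (D : V → V → Prop), (∀ ⦃u v v'⦄, D u v → D u v' → v = v') →
      (∀ ⦃u u' v⦄, D u v → D u' v → u = u') →
      (∀ ⦃u v⦄, D u v → D (f u) (f v)) →
      (∀ w ∈ S, ∃ z, D z w) →
      (∀ a b, s(a, b) ∈ p₁.edges → s(a, b) ∈ p₂.edges → D a b ∨ D b a) →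
      (∃ u ∈ S, ∀ z, D z u → z ∉ S) → ∃ u ∈ S, f u = u := by
    rintro D d1 d2 K hex hDE ⟨u, hu, hbd⟩
    refine ⟨u, hu, ?_⟩
    have hfu : f u ∈ S := hSf u hu
    have hbdf : ∀ z, D z (f u) → z ∉ S := by
      intro z hz
      obtain ⟨p, hp⟩ := hex u hu
      have hz2 : z = f p := d2 hz (K hp)
      rw [hz2]
      exact hSnf p (hbd p hp)
    obtain ⟨q, hqp, hqe, hqs⟩ := hseg u hu (f u) hfu
    rcases walk_forced d2 q hqp
        (fun a b hm => hDE a b (hqe _ hm).1 (hqe _ hm).2)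
        (fun z hz hmem => hbd z hz (hqs z (List.tail_subset _ hmem))) with h | h
    · exact h
    · obtain ⟨z, hz1, hz2⟩ := h
      exact absurd (hqs z hz1) (hbdf z hz2)
  by_cases hB1 : ∃ u ∈ S, ∀ z, (z, u) ∈ dl W₁ → z ∉ S
  · exact conc (bdry _ (dl_fst_unique hc₁) (dl_snd_unique hc₁) hK₁
      (fun w hw => exists_dl_snd_of_mem_support hc₁ hw.1)
      (fun a b hab _ => mem_dl_or_of_edge (hE₁ _ hab)) hB1)
  by_cases hB1' : ∃ u ∈ S, ∀ z, (u, z) ∈ dl W₁ → z ∉ S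
  · exact conc (bdry (fun u v => (v, u) ∈ dl W₁)
      (fun u v v' h h' => dl_snd_unique hc₁ h h')
      (fun u u' v h h' => dl_fst_unique hc₁ h h')
      (fun u v h => hK₁ h)
      (fun w hw => exists_dl_of_mem_support hc₁ hw.1)
      (fun a b hab _ => (mem_dl_or_of_edge (hE₁ _ hab)).symm) hB1')
  by_cases hB2 : ∃ u ∈ S, ∀ z, (z, u) ∈ dl W₂ → z ∉ S
  · exact conc (bdry _ (dl_fst_unique hc₂) (dl_snd_unique hc₂) hK₂
      (fun w hw => exists_dl_snd_of_mem_support hc₂ hw.2)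
      (fun a b _ hab => mem_dl_or_of_edge (hE₂ _ hab)) hB2)
  by_cases hB2' : ∃ u ∈ S, ∀ z, (u, z) ∈ dl W₂ → z ∉ S
  · exact conc (bdry (fun u v => (v, u) ∈ dl W₂)
      (fun u v v' h h' => dl_snd_unique hc₂ h h')
      (fun u u' v h h' => dl_fst_unique hc₂ h h')
      (fun u v h => hK₂ h)
      (fun w hw => exists_dl_of_mem_support hc₂ hw.2)
      (fun a b _ hab => (mem_dl_or_of_edge (hE₂ _ hab)).symm) hB2')
  -- No boundary vertex at all: both cycles have the same vertices, contradiction.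
  exfalso
  push_neg at hB1 hB1' hB2 hB2'
  obtain ⟨v₀, hv₀⟩ := hmeet
  rw [Subgraph.verts_inf, Set.mem_inter_iff, Walk.mem_verts_toSubgraph,
    Walk.mem_verts_toSubgraph] at hv₀
  have hv₀S : v₀ ∈ S := ⟨hv₀.1, hv₀.2⟩
  have hcov1 : ∀ w ∈ W₁.support, w ∈ S := by
    intro w hw
    obtain ⟨q, hqp, hqe, hqs⟩ := exists_segment p₁ hp₁ (hWs₁.mp hv₀.1) (hWs₁.mp hw)
    exact walk_reach (dl_fst_unique hc₁) (dl_snd_unique hc₁) (S := S)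
      (fun u hu => (hB1' u hu).imp (fun z hz => ⟨hz.2, hz.1⟩))
      (fun u hu => (hB1 u hu).imp (fun z hz => ⟨hz.2, hz.1⟩))
      q (fun a b hm => mem_dl_or_of_edge (hE₁ _ (hqe _ hm))) hv₀S
  have hcov2 : ∀ w ∈ W₂.support, w ∈ S := by
    intro w hw
    obtain ⟨q, hqp, hqe, hqs⟩ := exists_segment p₂ hp₂ (hWs₂.mp hv₀.2) (hWs₂.mp hw)
    exact walk_reach (dl_fst_unique hc₂) (dl_snd_unique hc₂) (S := S)
      (fun u hu => (hB2' u hu).imp (fun z hz => ⟨hz.2, hz.1⟩))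
      (fun u hu => (hB2 u hu).imp (fun z hz => ⟨hz.2, hz.1⟩))
      q (fun a b hm => mem_dl_or_of_edge (hE₂ _ (hqe _ hm))) hv₀S
  apply hne
  have hb₂p₁ : b₂ ∈ p₁.support :=
    hWs₁.mp (hcov2 b₂ (hWs₂.mpr p₂.start_mem_support)).1
  have ha₂p₁ : a₂ ∈ p₁.support :=
    hWs₁.mp (hcov2 a₂ W₂.start_mem_support).1
  have hb₁p₂ : b₁ ∈ p₂.support :=
    hWs₂.mp (hcov1 b₁ (hWs₁.mpr p₁.start_mem_support)).2
  have ha₁p₂ : a₁ ∈ p₂.support :=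
    hWs₂.mp (hcov1 a₁ W₁.start_mem_support).2
  -- mutual inclusion of edge sets, hence equal lengths
  have hsub21 : ∀ e ∈ p₂.edges, e ∈ p₁.edges := by
    obtain ⟨q, hqp, hqe, hqs⟩ := exists_segment p₁ hp₁ hb₂p₁ ha₂p₁
    have hq2 : q = p₂ := (hT.existsUnique_path b₂ a₂).unique hqp hp₂
    exact fun e he => hqe e (by rw [hq2]; exact he)
  have hsub12 : ∀ e ∈ p₁.edges, e ∈ p₂.edges := by
    obtain ⟨q, hqp, hqe, hqs⟩ := exists_segment p₂ hp₂ hb₁p₂ ha₁p₂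
    have hq2 : q = p₁ := (hT.existsUnique_path b₁ a₁).unique hqp hp₁
    exact fun e he => hqe e (by rw [hq2]; exact he)
  have hnd1 : p₁.edges.Nodup := hp₁.isTrail.edges_nodup
  have hnd2 : p₂.edges.Nodup := hp₂.isTrail.edges_nodup
  have hlen : p₁.length = p₂.length := by
    have hfs : p₁.edges.toFinset = p₂.edges.toFinset := by
      apply Finset.Subset.antisymm <;> intro e he <;>
        simp only [List.mem_toFinset] at he ⊢
      · exact hsub12 e he
      · exact hsub21 e he
    have hcard := congrArg Finset.card hfs
    rw [List.card_toFinset, List.card_toFinset, List.dedup_eq_self.mpr hnd1,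
      List.dedup_eq_self.mpr hnd2] at hcard
    rw [← Walk.length_edges, ← Walk.length_edges]
    exact hcard
  by_cases hcase : a₂ ∈ (p₁.dropUntil b₂ hb₂p₁).support
  · have hrp : ((p₁.dropUntil b₂ hb₂p₁).takeUntil a₂ hcase).IsPath :=
      (hp₁.dropUntil _).takeUntil _
    have hr2 : (p₁.dropUntil b₂ hb₂p₁).takeUntil a₂ hcase = p₂ :=
      (hT.existsUnique_path b₂ a₂).unique hrp hp₂
    have e1 := congrArg Walk.length (Walk.take_spec p₁ hb₂p₁)
    rw [Walk.length_append] at e1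
    have e2 := congrArg Walk.length (Walk.take_spec (p₁.dropUntil b₂ hb₂p₁) hcase)
    rw [Walk.length_append] at e2
    have e3 : ((p₁.dropUntil b₂ hb₂p₁).takeUntil a₂ hcase).length = p₂.length := by
      rw [hr2]
    have hl1 : (p₁.takeUntil b₂ hb₂p₁).length = 0 := by omega
    have hl2 : ((p₁.dropUntil b₂ hb₂p₁).dropUntil a₂ hcase).length = 0 := by omega
    have hbb : b₁ = b₂ := Walk.eq_of_length_eq_zero hl1
    have haa : a₂ = a₁ := Walk.eq_of_length_eq_zero hl2
    subst hbb
    subst haa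
    have hpp : p₂ = p₁ := (hT.existsUnique_path b₁ a₂).unique hp₂ hp₁
    rw [hW₁def, hW₂def, hpp]
  · have hy3 : a₂ ∈ (p₁.takeUntil b₂ hb₂p₁).support := by
      have := Walk.mem_support_append_iff (t := a₂) (p₁.takeUntil b₂ hb₂p₁)
        (p₁.dropUntil b₂ hb₂p₁)
      rw [Walk.take_spec p₁ hb₂p₁] at this
      rcases this.mp ha₂p₁ with h1 | h1
      · exact h1
      · exact absurd h1 hcase
    have hy4 : a₂ ∈ (p₁.takeUntil b₂ hb₂p₁).reverse.support := by
      rwa [Walk.support_reverse, List.mem_reverse]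
    have hrp : ((p₁.takeUntil b₂ hb₂p₁).reverse.takeUntil a₂ hy4).IsPath :=
      ((hp₁.takeUntil _).reverse).takeUntil _
    have hr2 : (p₁.takeUntil b₂ hb₂p₁).reverse.takeUntil a₂ hy4 = p₂ :=
      (hT.existsUnique_path b₂ a₂).unique hrp hp₂
    have e1 := congrArg Walk.length (Walk.take_spec p₁ hb₂p₁)
    rw [Walk.length_append] at e1
    have e2 := congrArg Walk.length
      (Walk.take_spec ((p₁.takeUntil b₂ hb₂p₁).reverse) hy4)
    rw [Walk.length_append] at e2
    have e2' : ((p₁.takeUntil b₂ hb₂p₁).reverse).length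
        = (p₁.takeUntil b₂ hb₂p₁).length := Walk.length_reverse _
    have e3 : ((p₁.takeUntil b₂ hb₂p₁).reverse.takeUntil a₂ hy4).length = p₂.length := by
      rw [hr2]
    have hl1 : (p₁.dropUntil b₂ hb₂p₁).length = 0 := by omega
    have hl2 : (((p₁.takeUntil b₂ hb₂p₁).reverse).dropUntil a₂ hy4).length = 0 := by
      omega
    have hbb : b₂ = a₁ := Walk.eq_of_length_eq_zero hl1
    have haa : a₂ = b₁ := Walk.eq_of_length_eq_zero hl2
    subst hbb
    subst haa
    have hpp : p₂ = p₁.reverse := (hT.existsUnique_path b₂ a₂).unique hp₂ hp₁.reverse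
    rw [hW₁def, hW₂def, hpp]
    have hmaprev : (p₁.reverse).mapLe hTG = (p₁.mapLe hTG).reverse :=
      (Walk.reverse_map (Hom.ofLE hTG) p₁).symm
    rw [hmaprev]
    show G.subgraphOfAdj h₁ ⊔ (p₁.mapLe hTG).toSubgraph
      = G.subgraphOfAdj h₂ ⊔ ((p₁.mapLe hTG).reverse).toSubgraph
    rw [Walk.toSubgraph_reverse]
    congr 1
    exact subgraphOfAdj_symm h₂
end

section
/- Let X be a finite simple connected graph with spanning tree T, and f an automorphism of X with M_T(f) = id. Then f(B) = B for every nontrivial block B of X (i.e., every block with at least three vertices). -/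
open SimpleGraph
variable {V : Type*}

variable {V : Type*}

/-- A subgraph is 2-connected: at least two vertices, and deleting at most one
vertex leaves it connected. (An edge with its endpoints counts as 2-connected.) -/
def IsTwoConnectedSub (G : SimpleGraph V) (H : G.Subgraph) : Prop :=
  2 ≤ H.verts.ncard ∧ ∀ s : Set V, s.ncard ≤ 1 → ((H.deleteVerts s).coe).Connected

/-- A block: a maximal 2-connected subgraph. -/
def IsBlock (G : SimpleGraph V) (B : G.Subgraph) : Prop :=
  IsTwoConnectedSub G B ∧ ∀ K : G.Subgraph, IsTwoConnectedSub G K → B ≤ K → K = B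


section Aux
variable [DecidableEq V]


def singleFlow (a b : V) : V → V → ℤ := fun x y =>
  (if x = a then if y = b then (1:ℤ) else 0 else 0) -
  (if x = b then if y = a then (1:ℤ) else 0 else 0)

def walkFlow {G : SimpleGraph V} : {a b : V} → G.Walk a b → (V → V → ℤ)
  | _, _, Walk.nil => 0
  | _, _, Walk.cons (u := a) (v := c) _ p => singleFlow a c + walkFlow p

@[simp] lemma walkFlow_nil {G : SimpleGraph V} {a : V} :
    walkFlow (Walk.nil : G.Walk a a) = 0 := rfl

@[simp] lemma walkFlow_cons {G : SimpleGraph V} {a c b : V} (h : G.Adj a c) (p : G.Walk c b) :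
    walkFlow (Walk.cons h p) = singleFlow a c + walkFlow p := rfl

lemma singleFlow_antisymm (a b x y : V) : singleFlow a b x y = - singleFlow a b y x := by
  simp only [singleFlow]
  split_ifs <;> omega

lemma walkFlow_antisymm {G : SimpleGraph V} {a b : V} (p : G.Walk a b) (x y : V) :
    walkFlow p x y = - walkFlow p y x := by
  induction p with
  | nil => exact neg_zero.symm
  | cons h p ih =>
    simp only [walkFlow_cons, Pi.add_apply]
    rw [ih, singleFlow_antisymm]; ring

lemma walkFlow_support {G : SimpleGraph V} {a b : V} (p : G.Walk a b) (x y : V)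
    (h : walkFlow p x y ≠ 0) : s(x, y) ∈ p.edges := by
  induction p with
  | nil => exact absurd rfl h
  | cons h' p ih =>
    rename_i u v w
    simp only [walkFlow_cons, Pi.add_apply] at h
    by_cases hs : singleFlow u v x y = 0
    · simp only [hs, zero_add] at h
      simp [Walk.edges_cons, ih h]
    · simp only [singleFlow] at hs
      have : (x = u ∧ y = v) ∨ (x = v ∧ y = u) := by
        by_cases h1 : x = u <;> by_cases h2 : y = v <;> by_cases h3 : x = v <;>
          by_cases h4 : y = u <;> simp_all
      rcases this with ⟨rfl, rfl⟩ | ⟨rfl, rfl⟩ <;> simp [Walk.edges_cons, Sym2.eq_swap]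

lemma singleFlow_div [Fintype V] (a b u : V) :
    ∑ v, singleFlow a b u v = (if u = a then (1:ℤ) else 0) - (if u = b then 1 else 0) := by
  simp only [singleFlow, Finset.sum_sub_distrib]
  congr 1
  · by_cases h : u = a <;> simp [h, Finset.sum_ite_eq']
  · by_cases h : u = b <;> simp [h, Finset.sum_ite_eq']

lemma walkFlow_div [Fintype V] {G : SimpleGraph V} {a b : V} (p : G.Walk a b) (u : V) :
    ∑ v, walkFlow p u v = (if u = a then (1:ℤ) else 0) - (if u = b then 1 else 0) := by
  induction p with
  | nil => simp
  | cons h p ih =>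
    rename_i x y w
    simp only [walkFlow_cons, Pi.add_apply, Finset.sum_add_distrib, ih, singleFlow_div x y u]
    ring

lemma walkFlow_append {G : SimpleGraph V} {a b c : V} (p : G.Walk a b) (q : G.Walk b c) :
    walkFlow (p.append q) = walkFlow p + walkFlow q := by
  induction p with
  | nil => simp
  | cons h p ih => simp [Walk.cons_append, ih]; abel

lemma exists_adj_of_walk {G : SimpleGraph V} {a b : V} (p : G.Walk a b) (h : a ≠ b) :
    ∃ w, G.Adj a w := by
  cases p with
  | nil => exact absurd rfl h
  | cons h' _ => exact ⟨_, h'⟩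

lemma subwalk_adj {G : SimpleGraph V} (H : G.Subgraph) {a b : H.verts} (q : H.coe.Walk a b)
    {x y : V} (h : s(x, y) ∈ (q.map H.hom).edges) : H.Adj x y := by
  rw [Walk.edges_map, List.mem_map] at h
  obtain ⟨e, he, hmap⟩ := h
  induction e with
  | h e1 e2 =>
    have hadj : H.coe.Adj e1 e2 := q.adj_of_mem_edges he
    rw [Sym2.map_pair_eq, Sym2.eq_iff] at hmap
    rcases hmap with ⟨h1, h2⟩ | ⟨h1, h2⟩
    · rw [← h1, ← h2]; exact hadj
    · rw [← h1, ← h2]; exact hadj.symm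

lemma exists_flow [Fintype V] {G : SimpleGraph V} {B : G.Subgraph}
    (hB2 : IsTwoConnectedSub G B) (hB3 : 3 ≤ B.verts.ncard)
    {u v : V} (huv : B.Adj u v) :
    ∃ c ∈ cycleSpace ℤ G, (∀ x y : V, c x y ≠ 0 → B.Adj x y) ∧ c u v ≠ 0 := by
  have hu : u ∈ B.verts := B.edge_vert huv
  have hv : v ∈ B.verts := B.edge_vert huv.symm
  have hne : u ≠ v := (B.adj_sub huv).ne
  -- third vertex
  have hsub : ¬ B.verts ⊆ ({u, v} : Set V) := by
    intro h
    have h2 := Set.ncard_le_ncard h (Set.toFinite _)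
    have h3 : ({u, v} : Set V).ncard ≤ 2 := by
      calc ({u, v} : Set V).ncard ≤ ({v} : Set V).ncard + 1 := Set.ncard_insert_le u {v}
        _ = 2 := by rw [Set.ncard_singleton]
    omega
  obtain ⟨x, hxB, hx⟩ := Set.not_subset.mp hsub
  have hxu : x ≠ u := fun h => hx (by simp [h])
  have hxv : x ≠ v := fun h => hx (by simp [h])
  -- neighbor w of u distinct from v
  have hc1 := hB2.2 {v} (le_of_eq (Set.ncard_singleton v))
  have huD : u ∈ (B.deleteVerts {v}).verts := by
    rw [Subgraph.deleteVerts_verts]; exact ⟨hu, by simp [hne]⟩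
  have hxD : x ∈ (B.deleteVerts {v}).verts := by
    rw [Subgraph.deleteVerts_verts]; exact ⟨hxB, by simp [hxv]⟩
  obtain ⟨p⟩ := hc1.preconnected ⟨u, huD⟩ ⟨x, hxD⟩
  obtain ⟨w', hadj'⟩ := exists_adj_of_walk p (by simp [Subtype.ext_iff, hxu.symm])
  have hdel1 : (B.deleteVerts {v}).Adj u w' := by
    have := Subgraph.coe_adj_sub _ _ _ hadj'
    exact hadj'
  rw [Subgraph.deleteVerts_adj] at hdel1
  obtain ⟨-, -, hw'B, hwv, hBuw⟩ := hdel1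
  set w : V := (w' : V)
  have hwv' : w ≠ v := by simpa using hwv
  have hwu : w ≠ u := (B.adj_sub hBuw).ne'
  -- path from w to v avoiding u
  have hc2 := hB2.2 {u} (le_of_eq (Set.ncard_singleton u))
  have hwD : w ∈ (B.deleteVerts {u}).verts := by
    rw [Subgraph.deleteVerts_verts]; exact ⟨B.edge_vert hBuw.symm, by simp [hwu]⟩
  have hvD : v ∈ (B.deleteVerts {u}).verts := by
    rw [Subgraph.deleteVerts_verts]; exact ⟨hv, by simp [hne.symm]⟩
  obtain ⟨q⟩ := hc2.preconnected ⟨w, hwD⟩ ⟨v, hvD⟩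
  set q' : G.Walk w v := q.map (B.deleteVerts {u}).hom with hq'
  have hq'adj : ∀ x y : V, s(x, y) ∈ q'.edges → (B.deleteVerts {u}).Adj x y :=
    fun x y h => subwalk_adj _ q h
  -- the closed walk
  set W : G.Walk u u :=
    Walk.cons (B.adj_sub hBuw) (q'.append (Walk.cons (B.adj_sub huv.symm) Walk.nil)) with hW
  have hWsupp : ∀ x y : V, walkFlow W x y ≠ 0 → B.Adj x y := by
    intro a b hab
    have hmem := walkFlow_support W a b hab
    rw [hW] at hmem
    simp only [Walk.edges_cons, Walk.edges_append, List.mem_cons, List.mem_append] at hmem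
    rcases hmem with h | h | h
    · rw [Sym2.eq_iff] at h
      rcases h with ⟨h1, h2⟩ | ⟨h1, h2⟩
      · rw [h1, h2]; exact hBuw
      · rw [h1, h2]; exact hBuw.symm
    · exact (Subgraph.deleteVerts_adj.mp (hq'adj a b h)).2.2.2.2
    · simp only [Walk.edges_cons, Walk.edges_nil, List.mem_cons] at h
      rcases h with h | h
      · rw [Sym2.eq_iff] at h
        rcases h with ⟨h1, h2⟩ | ⟨h1, h2⟩
        · rw [h1, h2]; exact huv.symm
        · rw [h1, h2]; exact huv
      · simp at h
  refine ⟨walkFlow W, ⟨?_, walkFlow_antisymm W, fun z => by rw [walkFlow_div]; simp⟩, hWsupp, ?_⟩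
  · intro a b hnadj
    by_contra h
    exact hnadj (W.adj_of_mem_edges (walkFlow_support W a b h))
  · -- value at (u,v) is -1
    have hq'0 : walkFlow q' u v = 0 := by
      by_contra h
      exact (Subgraph.deleteVerts_adj.mp (hq'adj u v (walkFlow_support q' u v h))).2.1 rfl
    rw [hW]
    simp only [walkFlow_cons, walkFlow_append, Pi.add_apply, walkFlow_nil, Pi.zero_apply, hq'0]
    simp [singleFlow, Ne.symm hwv', Ne.symm hwu, hne, Ne.symm hne]

end Aux

theorem kernel_fixes_nontrivial_blocks_setwise [Fintype V]
    (G : SimpleGraph V) (hG : G.Connected)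
    (f : G ≃g G) (hf : FixesH1 ℤ G f)
    (B : G.Subgraph) (hB : IsBlock G B) (hB3 : 3 ≤ B.verts.ncard) :
    B.map f.toHom = B := by
  classical
  have key : ∀ x y : V, B.Adj x y → B.Adj (f x) (f y) := by
    intro x y hxy
    obtain ⟨c, hc, hsupp, hcxy⟩ := exists_flow hB.1 hB3 hxy
    exact hsupp _ _ (by rw [hf c hc x y]; exact hcxy)
  have key2 : ∀ x y : V, B.Adj (f x) (f y) → B.Adj x y := by
    intro x y hxy
    obtain ⟨c, hc, hsupp, hcxy⟩ := exists_flow hB.1 hB3 hxy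
    exact hsupp _ _ (by rw [← hf c hc x y]; exact hcxy)
  have hvert : ∀ x ∈ B.verts, ∃ y, B.Adj x y := by
    intro x hx
    have hc0 := hB.1.2 ∅ (by simp)
    have hsub : ¬ B.verts ⊆ ({x} : Set V) := by
      intro h
      have h2 := Set.ncard_le_ncard h (Set.toFinite _)
      rw [Set.ncard_singleton] at h2
      omega
    obtain ⟨z, hzB, hz⟩ := Set.not_subset.mp hsub
    have hzx : z ≠ x := fun h => hz (by simp [h])
    have hxD : x ∈ (B.deleteVerts ∅).verts := by rw [Subgraph.deleteVerts_verts]; simp [hx]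
    have hzD : z ∈ (B.deleteVerts ∅).verts := by rw [Subgraph.deleteVerts_verts]; simp [hzB]
    obtain ⟨p⟩ := hc0.preconnected ⟨x, hxD⟩ ⟨z, hzD⟩
    obtain ⟨w', hadj'⟩ := exists_adj_of_walk p (by simp [Subtype.ext_iff, hzx.symm])
    have hd : (B.deleteVerts ∅).Adj x w' := hadj'
    rw [Subgraph.deleteVerts_adj] at hd
    exact ⟨w', hd.2.2.2.2⟩
  have hmemiff : ∀ x : V, f x ∈ B.verts ↔ x ∈ B.verts := by
    intro x
    constructor
    · intro hx
      obtain ⟨y, hy⟩ := hvert _ hx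
      have h2 : B.Adj (f x) (f (f.symm y)) := by rwa [RelIso.apply_symm_apply]
      exact B.edge_vert (key2 _ _ h2)
    · intro hx
      obtain ⟨y, hy⟩ := hvert _ hx
      exact B.edge_vert (key _ _ hy)
  apply Subgraph.ext
  · apply Set.ext
    intro y
    simp only [Subgraph.map_verts, Set.mem_image]
    constructor
    · rintro ⟨x, hx, rfl⟩
      exact (hmemiff x).mpr hx
    · intro hy
      refine ⟨f.symm y, ?_, ?_⟩
      · exact (hmemiff (f.symm y)).mp (by rwa [RelIso.apply_symm_apply])
      · exact RelIso.apply_symm_apply f y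
  · funext a b
    apply propext
    simp only [Subgraph.map_adj]
    constructor
    · rintro ⟨x, y, hxy, rfl, rfl⟩
      exact key x y hxy
    · intro hab
      refine ⟨f.symm a, f.symm b, ?_, RelIso.apply_symm_apply f a, RelIso.apply_symm_apply f b⟩
      apply key2
      rwa [RelIso.apply_symm_apply, RelIso.apply_symm_apply]
end

section
/- Let X be a finite simple connected graph that is not a tree. Define X' as the graph obtained from X by deleting all pendant trees (i.e., X' is the maximal subgraph of X with minimum degree at least 2). If every pendant tree of X is rigid (has trivial automorphism group as a rooted tree), then the kernel of the action of Aut(X) on H_1(X,ℤ) embeds into the kernel of the action of Aut(X') on H_1(X',ℤ). -/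
open SimpleGraph
variable {V : Type*}

variable {V : Type*}

/-- The 2-core of `G`: the maximal subgraph all of whose vertices have degree at least 2
(equivalently, the subgraph obtained by deleting all pendant trees). -/
def IsTwoCore (G : SimpleGraph V) (H : G.Subgraph) : Prop :=
  (∀ v ∈ H.verts, 2 ≤ (H.neighborSet v).ncard) ∧
  ∀ K : G.Subgraph, (∀ v ∈ K.verts, 2 ≤ (K.neighborSet v).ncard) → K ≤ H

/-- A pendant tree of `G` rooted at `w`: `A` is the vertex set of a maximal acyclic
component of `G - w` hanging at `w`, so `{w} ∪ A` induces a tree. -/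
def IsPendantTree (G : SimpleGraph V) (w : V) (A : Set V) : Prop :=
  w ∉ A ∧ A.Nonempty ∧
  (∀ a ∈ A, ∀ b : V, G.Adj a b → b = w ∨ b ∈ A) ∧
  (G.induce (insert w A)).IsTree

variable {G : SimpleGraph V}


lemma edge_mem_toSubgraph_adj {u v a b : V} {p : G.Walk u v} (h : s(a,b) ∈ p.edges) :
    p.toSubgraph.Adj a b := by
  rw [← SimpleGraph.Subgraph.mem_edgeSet, SimpleGraph.Walk.mem_edges_toSubgraph]
  exact h

lemma cycle_start_two_le {x : V} {q : G.Walk x x} (hq : q.IsCycle) :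
    2 ≤ (q.toSubgraph.neighborSet x).ncard := by
  obtain ⟨b, hxb, r, rfl⟩ := SimpleGraph.Walk.not_nil_iff.mp hq.not_nil
  have hlen : 2 ≤ r.length := by
    have := hq.three_le_length
    simp only [SimpleGraph.Walk.length_cons] at this
    omega
  have hrnil : ¬ r.reverse.Nil := by
    rw [SimpleGraph.Walk.nil_iff_length_eq, SimpleGraph.Walk.length_reverse]
    omega
  obtain ⟨c, hxc, r₂, hr2⟩ := SimpleGraph.Walk.not_nil_iff.mp hrnil
  have hcr : s(x, c) ∈ r.edges := by
    rw [← List.mem_reverse, ← SimpleGraph.Walk.edges_reverse, hr2]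
    simp
  have hne : b ≠ c := by
    rintro rfl
    exact ((SimpleGraph.Walk.cons_isCycle_iff r hxb).mp hq).2 hcr
  have h1 : (SimpleGraph.Walk.cons hxb r).toSubgraph.Adj x b :=
    edge_mem_toSubgraph_adj (by simp)
  have h2 : (SimpleGraph.Walk.cons hxb r).toSubgraph.Adj x c :=
    edge_mem_toSubgraph_adj (by simp [hcr])
  calc 2 = ({b, c} : Set V).ncard := (Set.ncard_pair hne).symm
    _ ≤ _ := Set.ncard_le_ncard (by rintro y (rfl | rfl) <;> assumption)
      (SimpleGraph.Walk.finite_neighborSet_toSubgraph _)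

lemma cycle_two_le {v : V} {c : G.Walk v v} (hc : c.IsCycle) {x : V} (hx : x ∈ c.support) :
    2 ≤ (c.toSubgraph.neighborSet x).ncard := by
  classical
  rw [← SimpleGraph.Walk.toSubgraph_rotate c hx]
  exact cycle_start_two_le (hc.rotate hx)




lemma path_interior_two_le : ∀ {u v : V} (p : G.Walk u v), p.IsPath → ∀ {x : V},
    x ∈ p.support → x ≠ u → x ≠ v → 2 ≤ (p.toSubgraph.neighborSet x).ncard := by
  intro u v p
  induction p with
  | nil => intro _ x hx hxu _; simp at hx; exact absurd hx hxu
  | @cons u u₁ v h q ih =>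
    intro hp x hx hxu hxv
    have hq : q.IsPath := hp.of_cons
    rcases eq_or_ne x u₁ with rfl | hxu₁
    · -- neighbors: u and q's second vertex
      have hqnil : ¬ q.Nil := SimpleGraph.Walk.not_nil_of_ne hxv
      obtain ⟨c, hxc, q₂, rfl⟩ := SimpleGraph.Walk.not_nil_iff.mp hqnil
      have h1 : (SimpleGraph.Walk.cons h (SimpleGraph.Walk.cons hxc q₂)).toSubgraph.Adj x u :=
        (edge_mem_toSubgraph_adj (by simp [Sym2.eq_swap])).symm
      have h2 : (SimpleGraph.Walk.cons h (SimpleGraph.Walk.cons hxc q₂)).toSubgraph.Adj x c :=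
        edge_mem_toSubgraph_adj (by simp)
      have hne : u ≠ c := by
        rintro rfl
        have : u ∈ (SimpleGraph.Walk.cons hxc q₂).support := by simp
        exact ((SimpleGraph.Walk.cons_isPath_iff _ _).mp hp).2 this
      calc 2 = ({u, c} : Set V).ncard := (Set.ncard_pair hne).symm
        _ ≤ _ := Set.ncard_le_ncard (by rintro y (rfl | rfl) <;> assumption)
          (SimpleGraph.Walk.finite_neighborSet_toSubgraph _)
    · have hx' : x ∈ q.support := by
        rcases (SimpleGraph.Walk.mem_support_iff _).mp hx with rfl | h'
        · exact absurd rfl hxu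
        · simpa using h'
      have := ih hq hx' hxu₁ hxv
      refine le_trans this (Set.ncard_le_ncard ?_ (SimpleGraph.Walk.finite_neighborSet_toSubgraph _))
      intro y hy
      simp only [SimpleGraph.Walk.toSubgraph, SimpleGraph.Subgraph.neighborSet_sup]
      exact Or.inr hy

lemma no_second_attach [Fintype V] {H : G.Subgraph} (hH : IsTwoCore G H)
    {w a b : V} (p : G.Walk w a) (hp : p.IsPath) (hwa : w ≠ a)
    (hsupp : ∀ x ∈ p.support, x = w ∨ x ∉ H.verts)
    (hw : w ∈ H.verts) (hb : b ∈ H.verts) (hbw : b ≠ w) (hab : G.Adj a b) : False := by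
  set K := H ⊔ p.toSubgraph ⊔ G.subgraphOfAdj hab with hK
  have hKfin : ∀ v : V, (K.neighborSet v).Finite := fun v => Set.toFinite _
  have hdeg : ∀ v ∈ K.verts, 2 ≤ (K.neighborSet v).ncard := by
    intro v hv
    by_cases hvH : v ∈ H.verts
    · refine le_trans (hH.1 v hvH) (Set.ncard_le_ncard ?_ (hKfin v))
      intro y hy
      exact SimpleGraph.Subgraph.sup_adj.mpr (Or.inl (SimpleGraph.Subgraph.sup_adj.mpr (Or.inl hy)))
    · have hvs : v ∈ p.support := by
        have : v ∈ (H ⊔ p.toSubgraph ⊔ G.subgraphOfAdj hab).verts := hv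
        simp only [SimpleGraph.Subgraph.verts_sup, Set.mem_union,
          SimpleGraph.Walk.verts_toSubgraph, Set.mem_setOf_eq] at this
        rcases this with ((h | h) | h)
        · exact absurd h hvH
        · exact h
        · rcases h with rfl | rfl
          · exact SimpleGraph.Walk.end_mem_support p
          · exact absurd hb hvH
      have hvw : v ≠ w := fun h => hvH (h ▸ hw)
      rcases eq_or_ne v a with rfl | hva
      · have hrnil : ¬ p.reverse.Nil := SimpleGraph.Walk.not_nil_of_ne (Ne.symm hwa)
        obtain ⟨c, hac, r₂, hr2⟩ := SimpleGraph.Walk.not_nil_iff.mp hrnil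
        have hcs : c ∈ p.support := by
          have : c ∈ p.reverse.support := by rw [hr2]; simp
          simpa using this
        have h1 : K.Adj v c := by
          refine SimpleGraph.Subgraph.sup_adj.mpr (Or.inl (SimpleGraph.Subgraph.sup_adj.mpr
            (Or.inr (edge_mem_toSubgraph_adj ?_))))
          rw [← List.mem_reverse, ← SimpleGraph.Walk.edges_reverse, hr2]
          simp
        have h2 : K.Adj v b := SimpleGraph.Subgraph.sup_adj.mpr (Or.inr (by simp))
        have hne : c ≠ b := by
          rintro rfl
          rcases hsupp c hcs with rfl | h
          · exact hbw rfl
          · exact h hb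
        calc 2 = ({c, b} : Set V).ncard := (Set.ncard_pair hne).symm
          _ ≤ _ := Set.ncard_le_ncard (by rintro y (rfl | rfl) <;> assumption) (hKfin v)
      · refine le_trans (path_interior_two_le p hp hvs hvw hva)
          (Set.ncard_le_ncard ?_ (hKfin v))
        intro y hy
        exact SimpleGraph.Subgraph.sup_adj.mpr (Or.inl (SimpleGraph.Subgraph.sup_adj.mpr (Or.inr hy)))
  have hle := hH.2 K hdeg
  have haH : a ∈ H.verts := hle.1 (by
    simp only [hK, SimpleGraph.Subgraph.verts_sup, Set.mem_union]
    exact Or.inl (Or.inr (by simp [SimpleGraph.Walk.verts_toSubgraph])))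
  rcases hsupp a (SimpleGraph.Walk.end_mem_support p) with rfl | h
  · exact hwa rfl
  · exact h haH

/-- The union of pendant trees hanging at `w`. -/
def Aset (G : SimpleGraph V) (H : G.Subgraph) (w : V) : Set V :=
  {v | v ∉ H.verts ∧ ∃ p : G.Walk w v, ∀ x ∈ p.support, x = w ∨ x ∉ H.verts}

lemma reach_aux {H : G.Subgraph} : ∀ {v u : V} (_ : G.Walk v u), v ∉ H.verts → u ∈ H.verts →
    ∃ w ∈ H.verts, v ∈ Aset G H w := by
  intro v u p
  induction p with
  | nil => intro hv hu; exact absurd hu hv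
  | @cons v v₁ u h q ih =>
    intro hv hu
    by_cases hv₁ : v₁ ∈ H.verts
    · refine ⟨v₁, hv₁, hv, SimpleGraph.Walk.cons h.symm SimpleGraph.Walk.nil, ?_⟩
      intro x hx
      simp only [SimpleGraph.Walk.support_cons, SimpleGraph.Walk.support_nil,
        List.mem_cons, List.not_mem_nil, or_false] at hx
      rcases hx with rfl | rfl
      · exact Or.inl rfl
      · exact Or.inr hv
    · obtain ⟨w, hw, hv₁A, p', hp'⟩ := ih hv₁ hu
      refine ⟨w, hw, hv, p'.append (SimpleGraph.Walk.cons h.symm SimpleGraph.Walk.nil), ?_⟩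
      intro x hx
      rw [SimpleGraph.Walk.support_append, List.mem_append] at hx
      rcases hx with hx | hx
      · exact hp' x hx
      · simp only [SimpleGraph.Walk.support_cons, SimpleGraph.Walk.support_nil, List.tail] at hx
        simp at hx
        exact Or.inr (hx ▸ hv)

lemma Aset_closure [Fintype V] {H : G.Subgraph} (hH : IsTwoCore G H) {w : V}
    (hw : w ∈ H.verts) {a b : V} (ha : a ∈ Aset G H w) (hab : G.Adj a b) :
    b = w ∨ b ∈ Aset G H w := by
  classical
  obtain ⟨haH, p, hp⟩ := ha
  by_cases hbH : b ∈ H.verts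
  · left
    by_contra hbw
    refine no_second_attach hH p.bypass p.bypass_isPath ?_ ?_ hw hbH hbw hab
    · rintro rfl; exact haH hw
    · exact fun x hx => hp x (p.support_bypass_subset hx)
  · right
    refine ⟨hbH, p.append (SimpleGraph.Walk.cons hab SimpleGraph.Walk.nil), ?_⟩
    intro x hx
    rw [SimpleGraph.Walk.support_append, List.mem_append] at hx
    rcases hx with hx | hx
    · exact hp x hx
    · simp only [SimpleGraph.Walk.support_cons, SimpleGraph.Walk.support_nil, List.tail] at hx
      simp at hx
      exact Or.inr (hx ▸ hbH)

lemma cycle_le_core [Fintype V] {H : G.Subgraph} (hH : IsTwoCore G H) {v : V}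
    {c : G.Walk v v} (hc : c.IsCycle) : c.toSubgraph ≤ H := by
  refine hH.2 _ ?_
  intro x hx
  exact cycle_two_le hc ((SimpleGraph.Walk.mem_verts_toSubgraph c).mp hx)

lemma reachable_induce_of_walk {T : Set V} : ∀ {u v : V} (p : G.Walk u v)
    (hs : ∀ x ∈ p.support, x ∈ T),
    (G.induce T).Reachable ⟨u, hs u p.start_mem_support⟩ ⟨v, hs v p.end_mem_support⟩ := by
  intro u v p
  induction p with
  | nil => intro _; rfl
  | @cons u u₁ v h q ih =>
    intro hs
    have hs' : ∀ x ∈ q.support, x ∈ T := fun x hx => hs x (by simp [hx])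
    refine SimpleGraph.Reachable.trans ?_ (ih hs')
    exact SimpleGraph.Adj.reachable (by simpa using h)

lemma Aset_mem_of_support {H : G.Subgraph} {w : V} {x : V} {v : V} (p : G.Walk w v)
    (hp : ∀ y ∈ p.support, y = w ∨ y ∉ H.verts) (hx : x ∈ p.support) (hxH : x ∉ H.verts) :
    x ∈ Aset G H w := by
  classical
  exact ⟨hxH, p.takeUntil x hx, fun y hy => hp y (p.support_takeUntil_subset hx hy)⟩

lemma pendant_tree [Fintype V] {H : G.Subgraph} (hH : IsTwoCore G H) {w : V}
    (hw : w ∈ H.verts) (hne : (Aset G H w).Nonempty) :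
    IsPendantTree G w (Aset G H w) := by
  classical
  refine ⟨fun h => h.1 hw, hne, fun a ha b hab => Aset_closure hH hw ha hab, ?_, ?_⟩
  · -- connected
    rw [SimpleGraph.connected_iff]
    constructor
    · intro x y
      suffices h : ∀ z : {t // t ∈ insert w (Aset G H w)},
          (G.induce (insert w (Aset G H w))).Reachable z ⟨w, Set.mem_insert _ _⟩ by
        exact (h x).trans (h y).symm
      rintro ⟨z, hz⟩
      rcases hz with rfl | hz
      · rfl
      · obtain ⟨hzH, p, hp⟩ := hz
        have hsub : ∀ x ∈ p.support, x ∈ insert w (Aset G H w) := by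
          intro x hx
          rcases eq_or_ne x w with rfl | hxw
          · exact Set.mem_insert _ _
          · rcases hp x hx with rfl | hxH
            · exact Set.mem_insert _ _
            · exact Set.mem_insert_of_mem _ (Aset_mem_of_support p hp hx hxH)
        exact (reachable_induce_of_walk p hsub).symm
    · exact ⟨⟨w, Set.mem_insert _ _⟩⟩
  · -- acyclic
    intro z c hc
    have hinj : Function.Injective
        (SimpleGraph.Embedding.induce (G := G) (insert w (Aset G H w))).toHom := by
      intro a b h
      exact Subtype.val_injective h
    have hc' := hc.map hinj
    set c' := c.map _ with hc'def
    have hle := cycle_le_core hH hc'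
    have hsupp : ∀ y ∈ c'.support, y = w := by
      intro y hy
      have hyH : y ∈ H.verts := hle.1 ((SimpleGraph.Walk.mem_verts_toSubgraph c').mpr hy)
      have hyS : y ∈ insert w (Aset G H w) := by
        rw [hc'def, SimpleGraph.Walk.support_map] at hy
        obtain ⟨⟨y', hy'⟩, _, rfl⟩ := List.mem_map.mp hy
        exact hy'
      rcases hyS with rfl | hyA
      · rfl
      · exact absurd hyH hyA.1
    obtain ⟨b, hadj, r, hr⟩ := SimpleGraph.Walk.not_nil_iff.mp hc'.not_nil
    have h1 := hsupp _ c'.start_mem_support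
    have h2 : b ∈ c'.support := by rw [hr, SimpleGraph.Walk.support_cons]; exact List.mem_cons_of_mem _ r.start_mem_support
    have h2' := hsupp b h2
    rw [h1, h2'] at hadj
    exact G.irrefl hadj

lemma map_le_core [Fintype V] {H : G.Subgraph} (hH : IsTwoCore G H) (e : G ≃g G) :
    H.map e.toHom ≤ H := by
  refine hH.2 _ ?_
  intro v hv
  obtain ⟨u, hu, rfl⟩ := hv
  have himg : (⇑e) '' (H.neighborSet u) ⊆ (H.map e.toHom).neighborSet (e u) := by
    rintro y ⟨y', hy', rfl⟩
    exact ⟨u, y', hy', rfl, rfl⟩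
  calc 2 ≤ (H.neighborSet u).ncard := hH.1 u hu
    _ = ((⇑e) '' (H.neighborSet u)).ncard :=
        (Set.ncard_image_of_injective _ e.injective).symm
    _ ≤ _ := Set.ncard_le_ncard himg (Set.toFinite _)

lemma map_eq_core [Fintype V] {H : G.Subgraph} (hH : IsTwoCore G H) (e : G ≃g G) :
    H.map e.toHom = H := by
  refine le_antisymm (map_le_core hH e) ?_
  have hs := map_le_core hH e.symm
  constructor
  · intro v hv
    have h1 : e.symm v ∈ H.verts := hs.1 ⟨v, hv, rfl⟩
    exact ⟨e.symm v, h1, e.apply_symm_apply v⟩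
  · intro a b hab
    have h1 : H.Adj (e.symm a) (e.symm b) := hs.2 ⟨a, b, hab, rfl, rfl⟩
    exact ⟨e.symm a, e.symm b, h1, e.apply_symm_apply a, e.apply_symm_apply b⟩

lemma core_nonempty [Fintype V] {H : G.Subgraph} (hH : IsTwoCore G H)
    (hnt : ¬ G.IsAcyclic) : H.verts.Nonempty := by
  rw [SimpleGraph.isAcyclic_iff_forall_adj_isBridge] at hnt
  push_neg at hnt
  obtain ⟨v, w, hadj, hnb⟩ := hnt
  rw [SimpleGraph.isBridge_iff_adj_and_forall_cycle_notMem] at hnb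
  push_neg at hnb
  obtain ⟨u, c, hc, _⟩ := hnb
  exact ⟨u, (cycle_le_core hH hc).1 c.start_mem_verts_toSubgraph⟩
  exact hadj

lemma fix_all [Fintype V] (hG : G.Connected) (hnt : ¬ G.IsAcyclic) {H : G.Subgraph}
    (hH : IsTwoCore G H)
    (hrigid : ∀ (w : V) (A : Set V), IsPendantTree G w A →
      ∀ φ : G.induce (insert w A) ≃g G.induce (insert w A),
        φ ⟨w, Set.mem_insert w A⟩ = ⟨w, Set.mem_insert w A⟩ → ∀ x, φ x = x)
    (h : G ≃g G) (hfix : ∀ v ∈ H.verts, h v = v) : ∀ v, h v = v := by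
  intro v
  by_cases hv : v ∈ H.verts
  · exact hfix v hv
  · -- find the pendant tree containing v
    obtain ⟨u, hu⟩ := core_nonempty hH hnt
    obtain ⟨p⟩ := hG.preconnected v u
    obtain ⟨w, hw, hvA⟩ := reach_aux p hv hu
    have hnotcore : ∀ x, x ∉ H.verts → h x ∉ H.verts := by
      intro x hx hhx
      have := hfix _ hhx
      exact hx (h.injective this ▸ hhx)
    have hnotcore' : ∀ x, x ∉ H.verts → h.symm x ∉ H.verts := by
      intro x hx hhx
      have h2 : h (h.symm x) = h.symm x := hfix _ hhx
      rw [h.apply_symm_apply] at h2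
      exact hx (h2 ▸ hhx)
    have hsymmfix : ∀ x ∈ H.verts, h.symm x = x := by
      intro x hx
      have h2 := congrArg h.symm (hfix x hx)
      rw [h.symm_apply_apply] at h2
      exact h2.symm
    have hAmap : ∀ (e : G ≃g G), (∀ x ∈ H.verts, e x = x) →
        (∀ x, x ∉ H.verts → e x ∉ H.verts) → ∀ x ∈ Aset G H w, e x ∈ Aset G H w := by
      intro e hefix henc x hx
      obtain ⟨hxH, p', hp'⟩ := hx
      refine ⟨henc x hxH, (p'.map e.toHom).copy (hefix w hw) rfl, ?_⟩
      intro y hy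
      rw [SimpleGraph.Walk.support_copy, SimpleGraph.Walk.support_map] at hy
      obtain ⟨y', hy', rfl⟩ := List.mem_map.mp hy
      rcases hp' y' hy' with rfl | hyH
      · exact Or.inl (hefix _ hw)
      · exact Or.inr (henc _ hyH)
    set S := insert w (Aset G H w) with hS
    have hmapS : ∀ x ∈ S, h x ∈ S := by
      rintro x (rfl | hx)
      · exact Or.inl (hfix _ hw)
      · exact Or.inr (hAmap h hfix hnotcore x hx)
    have hmapS' : ∀ x ∈ S, h.symm x ∈ S := by
      rintro x (rfl | hx)
      · exact Or.inl (hsymmfix _ hw)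
      · exact Or.inr (hAmap h.symm hsymmfix hnotcore' x hx)
    let e : {x // x ∈ S} ≃ {x // x ∈ S} :=
      ⟨fun x => ⟨h x, hmapS _ x.2⟩, fun x => ⟨h.symm x, hmapS' _ x.2⟩,
        fun x => Subtype.ext (h.symm_apply_apply _), fun x => Subtype.ext (h.apply_symm_apply _)⟩
    let φ : G.induce S ≃g G.induce S :=
      ⟨e, by intro a b; exact h.map_adj_iff⟩
    have hpend := pendant_tree hH hw ⟨v, hvA⟩
    have hroot : φ ⟨w, Set.mem_insert w _⟩ = ⟨w, Set.mem_insert w _⟩ :=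
      Subtype.ext (hfix w hw)
    have := hrigid w (Aset G H w) hpend φ hroot ⟨v, Set.mem_insert_of_mem _ hvA⟩
    exact congrArg Subtype.val this

theorem kernel_embeds_into_core_kernel [Fintype V] (G : SimpleGraph V)
    (hG : G.Connected) (hnt : ¬ G.IsAcyclic)
    (H : G.Subgraph) (hH : IsTwoCore G H)
    (hrigid : ∀ (w : V) (A : Set V), IsPendantTree G w A →
      ∀ φ : G.induce (insert w A) ≃g G.induce (insert w A),
        φ ⟨w, Set.mem_insert w A⟩ = ⟨w, Set.mem_insert w A⟩ → ∀ x, φ x = x) :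
    (∀ f : G ≃g G, FixesH1 ℤ G f →
      H.map f.toHom = H ∧
      -- the restriction of `f` to the core acts trivially on `H₁(X',ℤ)`
      ∀ c ∈ cycleSpace ℤ H.spanningCoe, ∀ u v : V, c (f u) (f v) = c u v) ∧
    -- the restriction map from the kernel is injective
    (∀ f g : G ≃g G, FixesH1 ℤ G f → FixesH1 ℤ G g →
      (∀ v ∈ H.verts, f v = g v) → ∀ v : V, f v = g v) := by
  constructor
  · intro f hf
    refine ⟨map_eq_core hH f, ?_⟩
    intro c hc u v
    apply hf
    obtain ⟨h1, h2, h3⟩ := hc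
    exact ⟨fun a b hab => h1 a b (fun hH' => hab (H.adj_sub hH')), h2, h3⟩
  · intro f g _ _ hagree v
    have hfix : ∀ x ∈ H.verts, (f.trans g.symm) x = x := by
      intro x hx
      show g.symm (f x) = x
      rw [hagree x hx]
      exact g.symm_apply_apply x
    have h1 : g.symm (f v) = v := fix_all hG hnt hH hrigid (f.trans g.symm) hfix v
    calc f v = g (g.symm (f v)) := (g.apply_symm_apply _).symm
      _ = g v := by rw [h1]
end
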